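/- Let n ∈ ℕ, N = 2^n, and let G be the n-fold Kronecker power over 𝔽₂ of the kernel [[1,0],[1,1]]. For every nonempty set T ⊆ {0,…,N−1} of row indices, the Hamming weight of the 𝔽₂-sum g_T = Σ_{t∈T} g_t of the corresponding rows satisfies, as an identity of integers, i₁(g_T) = Σ_{w=1}^{|T|} (−2)^{w−1} · Σ_{S ⊆ T, |S| = w} 2^{popcount(⋀_{j∈S} j)}, where ⋀_{j∈S} j is the bitwise AND of the elements of S and popcount counts the ones in the binary representation. -/

import Mathlib

open Finset

/-- The polar kernel `G₂ = [[1,0],[1,1]]` over `𝔽₂`. -/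
def polarKernel : Matrix (Fin 2) (Fin 2) (ZMod 2) := !![1, 0; 1, 1]

/-- The `n`-fold Kronecker power of the polar kernel, an `N × N` matrix over `𝔽₂`
with `N = 2 ^ n`, rows and columns indexed by `0, …, N-1`. -/
def polarG : (n : ℕ) → Matrix (Fin (2 ^ n)) (Fin (2 ^ n)) (ZMod 2)
  | 0 => 1
  | n + 1 =>
    Matrix.reindex (finCongr (by ring)) (finCongr (by ring))
      (Matrix.reindex finProdFinEquiv finProdFinEquiv
        (Matrix.kroneckerMap (· * ·) polarKernel (polarG n)))

/-- Row `g_t` of the polar matrix, as a vector in `𝔽₂^N`. -/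
def row (n : ℕ) (t : Fin (2 ^ n)) : Fin (2 ^ n) → ZMod 2 := fun c => polarG n t c

/-- Hamming weight `i₁(v)`: the number of nonzero coordinates of `v`. -/
def hammingWeight {N : ℕ} (v : Fin N → ZMod 2) : ℕ :=
  (Finset.univ.filter fun c => v c ≠ 0).card

/-- `popcount j`: the number of ones in the binary representation of `j`. -/
def popcount (j : ℕ) : ℕ := (Nat.bits j).count true

instance : Std.Commutative fun (a b : ℕ) => a &&& b := ⟨Nat.land_comm⟩
instance : Std.Associative fun (a b : ℕ) => a &&& b := ⟨Nat.land_assoc⟩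

lemma land_eq_self_iff {c m : ℕ} :
    c &&& m = c ↔ ∀ i, c.testBit i = true → m.testBit i = true := by
  constructor
  · intro h i hi
    have := congrArg (fun x => Nat.testBit x i) h
    simpa [Nat.testBit_land, hi] using this
  · intro h
    apply Nat.eq_of_testBit_eq
    intro i
    rw [Nat.testBit_land]
    cases hci : c.testBit i
    · simp
    · simp [h i hci]

lemma popcount_zero : popcount 0 = 0 := by simp [popcount, Nat.zero_bits]

lemma popcount_bit (m b : ℕ) (hb : b < 2) : popcount (2 * m + b) = popcount m + b := by
  interval_cases b
  · rcases Nat.eq_zero_or_pos m with rfl | hm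
    · simp [popcount_zero]
    · simp [popcount, Nat.bit0_bits m hm.ne']
  · simp [popcount, Nat.bit1_bits m]

lemma popcount_split (n : ℕ) : ∀ x a : ℕ, a < 2 ^ n →
    popcount (2 ^ n * x + a) = popcount x + popcount a := by
  induction n with
  | zero => intro x a ha; interval_cases a; simp [popcount_zero]
  | succ n ih =>
    intro x a ha
    have h0 : 2 ^ (n+1) * x = 2 * (2 ^ n * x) := by ring
    have h1 : 2 ^ (n+1) * x + a = 2 * (2 ^ n * x + a / 2) + a % 2 := by
      rw [h0]; omega
    rw [h1, popcount_bit _ _ (Nat.mod_lt _ (by norm_num)),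
      ih x (a / 2) (by omega)]
    have h2 : popcount a = popcount (a / 2) + a % 2 := by
      conv_lhs => rw [show a = 2 * (a / 2) + a % 2 by omega]
      exact popcount_bit _ _ (Nat.mod_lt _ (by norm_num))
    omega

lemma testBit_div_pow (c n i : ℕ) : (c / 2 ^ n).testBit i = c.testBit (n + i) := by
  rw [← Nat.shiftRight_eq_div_pow, Nat.testBit_shiftRight]

lemma land_split (n c m : ℕ) :
    c &&& m = c ↔ (c / 2 ^ n &&& m / 2 ^ n = c / 2 ^ n ∧ c % 2 ^ n &&& m % 2 ^ n = c % 2 ^ n) := by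
  simp only [land_eq_self_iff, testBit_div_pow, Nat.testBit_mod_two_pow]
  constructor
  · intro h
    refine ⟨fun i hi => h _ hi, fun i hi => ?_⟩
    simp only [Bool.and_eq_true, decide_eq_true_eq] at hi ⊢
    exact ⟨hi.1, h _ hi.2⟩
  · rintro ⟨h1, h2⟩ i hi
    rcases lt_or_ge i n with h | h
    · have := h2 i
      simp only [Bool.and_eq_true, decide_eq_true_eq] at this
      exact (this ⟨h, hi⟩).2
    · have := h1 (i - n)
      rw [Nat.add_sub_cancel' h] at this
      exact this hi

lemma card_submask (n : ℕ) : ∀ m : ℕ, m < 2 ^ n →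
    ((Finset.range (2 ^ n)).filter fun c => c &&& m = c).card = 2 ^ popcount m := by
  induction n with
  | zero =>
    intro m hm
    interval_cases m
    rw [popcount_zero]
    decide
  | succ n ih =>
    intro m hm
    have hpos : (0:ℕ) < 2 ^ n := Nat.pow_pos (by norm_num)
    have key : ((Finset.range (2 ^ (n+1))).filter fun c => c &&& m = c).card
        = (((Finset.range 2).filter fun a => a &&& m / 2 ^ n = a) ×ˢ
           ((Finset.range (2 ^ n)).filter fun b => b &&& m % 2 ^ n = b)).card := by
      have hdiv : ∀ a b : ℕ, b < 2 ^ n → (2 ^ n * a + b) / 2 ^ n = a := by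
        intro a b hb
        rw [Nat.mul_add_div hpos, Nat.div_eq_of_lt hb]; omega
      have hmod : ∀ a b : ℕ, b < 2 ^ n → (2 ^ n * a + b) % 2 ^ n = b := by
        intro a b hb
        rw [Nat.mul_add_mod, Nat.mod_eq_of_lt hb]
      have hi : ∀ c ∈ (Finset.range (2 ^ (n+1))).filter fun c => c &&& m = c,
          (c / 2 ^ n, c % 2 ^ n) ∈ ((Finset.range 2).filter fun a => a &&& m / 2 ^ n = a) ×ˢ
            ((Finset.range (2 ^ n)).filter fun b => b &&& m % 2 ^ n = b) := by
        intro c hc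
        simp only [Finset.mem_filter, Finset.mem_range] at hc
        have h2 := (land_split n c m).mp hc.2
        simp only [Finset.mem_product, Finset.mem_filter, Finset.mem_range]
        refine ⟨⟨?_, h2.1⟩, ⟨Nat.mod_lt _ hpos, h2.2⟩⟩
        apply Nat.div_lt_of_lt_mul
        rw [← pow_succ]; exact hc.1
      have hj : ∀ p ∈ ((Finset.range 2).filter fun a => a &&& m / 2 ^ n = a) ×ˢ
            ((Finset.range (2 ^ n)).filter fun b => b &&& m % 2 ^ n = b),
          2 ^ n * p.1 + p.2 ∈ (Finset.range (2 ^ (n+1))).filter fun c => c &&& m = c := by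
        rintro ⟨a, b⟩ hp
        simp only [Finset.mem_product, Finset.mem_filter, Finset.mem_range] at hp
        obtain ⟨⟨ha2, ha⟩, hb2, hb⟩ := hp
        simp only [Finset.mem_filter, Finset.mem_range]
        constructor
        · rw [pow_succ]
          interval_cases a <;> omega
        · rw [land_split n, hdiv a b hb2, hmod a b hb2]; exact ⟨ha, hb⟩
      exact Finset.card_bij' (fun c _ => (c / 2 ^ n, c % 2 ^ n)) (fun p _ => 2 ^ n * p.1 + p.2)
        hi hj (fun c _ => Nat.div_add_mod c (2 ^ n))
        (by rintro ⟨a, b⟩ hp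
            simp only [Finset.mem_product, Finset.mem_filter, Finset.mem_range] at hp
            simp only
            rw [hdiv a b hp.2.1, hmod a b hp.2.1])
    rw [key, Finset.card_product]
    have hmlt : m / 2 ^ n < 2 := by
      apply Nat.div_lt_of_lt_mul
      rw [← pow_succ]; exact hm
    have hhi : ((Finset.range 2).filter fun a => a &&& m / 2 ^ n = a).card
        = 2 ^ popcount (m / 2 ^ n) := by
      interval_cases h : m / 2 ^ n
      · rw [show ((Finset.range 2).filter fun a => a &&& 0 = a) = {0} from by decide]
        rw [popcount_zero]; rfl
      · rw [show ((Finset.range 2).filter fun a => a &&& 1 = a) = {0, 1} from by decide]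
        have h1 : popcount 1 = 1 := by
          have := popcount_bit 0 1 (by norm_num); simpa [popcount_zero] using this
        rw [h1]; rfl
    rw [hhi, ih (m % 2 ^ n) (Nat.mod_lt _ hpos)]
    rw [← pow_add, ← popcount_split n (m / 2 ^ n) (m % 2 ^ n) (Nat.mod_lt _ hpos),
      Nat.div_add_mod]

lemma polarKernel_apply (a b : Fin 2) :
    polarKernel a b = if (b : ℕ) &&& (a : ℕ) = (b : ℕ) then 1 else 0 := by
  fin_cases a <;> fin_cases b <;> simp [polarKernel] <;> rfl

lemma polarG_apply (n : ℕ) (t c : Fin (2 ^ n)) :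
    polarG n t c = if (c : ℕ) &&& (t : ℕ) = (c : ℕ) then 1 else 0 := by
  induction n with
  | zero =>
    have ht : (t : ℕ) = 0 := by omega
    have hc : (c : ℕ) = 0 := by omega
    have htc : t = c := by ext; omega
    simp [polarG, Matrix.one_apply, htc, ht, hc]
  | succ n ih =>
    show (Matrix.reindex (finCongr _) (finCongr _)
      (Matrix.reindex finProdFinEquiv finProdFinEquiv
        (Matrix.kroneckerMap (· * ·) polarKernel (polarG n)))) t c = _
    rw [Matrix.reindex_apply, Matrix.reindex_apply]
    simp only [Matrix.submatrix_apply, Matrix.kroneckerMap_apply]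
    rw [polarKernel_apply, ih]
    simp only [finProdFinEquiv_symm_apply, Fin.coe_divNat, Fin.coe_modNat, finCongr_symm,
      finCongr_apply, Fin.coe_cast]
    rw [show ∀ (A B : Prop) (_ : Decidable A) (_ : Decidable B),
        (if A then (1 : ZMod 2) else 0) * (if B then 1 else 0) = if A ∧ B then 1 else 0 from by
      intro A B dA dB
      by_cases hA : A <;> by_cases hB : B <;> simp [hA, hB]]
    exact if_congr (land_split n (c : ℕ) (t : ℕ)).symm rfl rfl

lemma odd_indicator (m M : ℕ) (h : m ≤ M) :
    ∑ w ∈ Finset.Icc 1 M, (-2 : ℤ) ^ (w - 1) * (m.choose w : ℤ) =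
      if Odd m then 1 else 0 := by
  have key : ∑ w ∈ Finset.Icc 1 M, (-2 : ℤ) ^ w * (m.choose w : ℤ) = (-1) ^ m - 1 := by
    have hins : Finset.range (M + 1) = insert 0 (Finset.Icc 1 M) := by
      ext x; simp [Nat.lt_succ_iff]; omega
    have hfull : ∑ w ∈ Finset.range (M + 1), (-2 : ℤ) ^ w * (m.choose w : ℤ) = (-1) ^ m := by
      have hsub : ∑ w ∈ Finset.range (m + 1), (-2 : ℤ) ^ w * (m.choose w : ℤ)
          = ∑ w ∈ Finset.range (M + 1), (-2 : ℤ) ^ w * (m.choose w : ℤ) := by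
        apply Finset.sum_subset
        · intro x hx; simp only [Finset.mem_range] at hx ⊢; omega
        · intro x _ hx
          simp only [Finset.mem_range, not_lt] at hx
          rw [Nat.choose_eq_zero_of_lt (by omega)]
          simp
      rw [← hsub]
      have := add_pow (-2 : ℤ) 1 m
      simp only [one_pow, mul_one] at this
      rw [show ((-2 : ℤ) + 1) = -1 from by ring] at this
      rw [← this]
    rw [hins, Finset.sum_insert (by simp)] at hfull
    simp only [pow_zero, Nat.choose_zero_right, Nat.cast_one, one_mul] at hfull
    linarith
  have h2 : (-2 : ℤ) * ∑ w ∈ Finset.Icc 1 M, (-2 : ℤ) ^ (w - 1) * (m.choose w : ℤ)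
      = (-2 : ℤ) * (if Odd m then 1 else 0) := by
    rw [Finset.mul_sum]
    have : ∀ w ∈ Finset.Icc 1 M, (-2 : ℤ) * ((-2 : ℤ) ^ (w - 1) * (m.choose w : ℤ))
        = (-2 : ℤ) ^ w * (m.choose w : ℤ) := by
      intro w hw
      simp only [Finset.mem_Icc] at hw
      rw [← mul_assoc, ← pow_succ']
      congr 2
      omega
    rw [Finset.sum_congr rfl this, key]
    rcases Nat.even_or_odd m with hm | hm
    · rw [if_neg (by simpa using hm), hm.neg_one_pow]; ring
    · rw [if_pos hm, hm.neg_one_pow]; ring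
  exact mul_left_cancel₀ (by norm_num : (-2 : ℤ) ≠ 0) h2

lemma filter_powersetCard {α : Type*} [DecidableEq α] (w : ℕ) (T : Finset α)
    (P : α → Prop) [DecidablePred P] :
    (Finset.powersetCard w T).filter (fun S => ∀ t ∈ S, P t)
      = Finset.powersetCard w (T.filter P) := by
  ext S
  simp only [Finset.mem_filter, Finset.mem_powersetCard, Finset.subset_iff]
  constructor
  · rintro ⟨⟨hsub, hcard⟩, hall⟩
    exact ⟨fun x hx => ⟨hsub hx, hall _ hx⟩, hcard⟩
  · rintro ⟨hsub, hcard⟩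
    exact ⟨⟨fun x hx => (hsub hx).1, hcard⟩, fun t ht => (hsub ht).2⟩

lemma fold_land_le (n : ℕ) (S : Finset (Fin (2 ^ n))) :
    Finset.fold (fun a b : ℕ => a &&& b) (2 ^ n - 1) (fun j : Fin (2 ^ n) => (j : ℕ)) S ≤ 2 ^ n - 1 := by
  classical
  induction S using Finset.induction_on with
  | empty => simp
  | insert _ _ ha ih =>
    rw [Finset.fold_insert ha]
    exact le_trans Nat.and_le_right ih

lemma fold_land_iff (n : ℕ) (c : ℕ) (hc : c < 2 ^ n) (S : Finset (Fin (2 ^ n))) :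
    c &&& Finset.fold (fun a b : ℕ => a &&& b) (2 ^ n - 1) (fun j : Fin (2 ^ n) => (j : ℕ)) S = c
      ↔ ∀ t ∈ S, c &&& (t : ℕ) = c := by
  classical
  induction S using Finset.induction_on with
  | empty =>
    simp only [Finset.fold_empty, Finset.notMem_empty, false_implies, implies_true, iff_true]
    rw [land_eq_self_iff]
    intro i hi
    rw [Nat.testBit_two_pow_sub_one]
    by_contra hni
    simp only [decide_eq_true_eq] at hni
    have : c < 2 ^ i := lt_of_lt_of_le hc (Nat.pow_le_pow_right (by norm_num) (by omega))
    rw [Nat.testBit_lt_two_pow this] at hi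
    exact absurd hi (by simp)
  | @insert a s ha ih =>
    rw [Finset.fold_insert ha]
    have split : ∀ x y : ℕ, c &&& (x &&& y) = c ↔ (c &&& x = c ∧ c &&& y = c) := by
      intro x y
      simp only [land_eq_self_iff, Nat.testBit_land, Bool.and_eq_true]
      constructor
      · intro h
        exact ⟨fun i hi => (h i hi).1, fun i hi => (h i hi).2⟩
      · intro h i hi
        exact ⟨h.1 i hi, h.2 i hi⟩
    rw [split, ih]
    simp only [Finset.mem_insert]
    constructor
    · rintro ⟨h1, h2⟩ t (rfl | ht)
      · exact h1
      · exact h2 t ht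
    · intro h
      exact ⟨h a (Or.inl rfl), fun t ht => h t (Or.inr ht)⟩

lemma card_fin_submask (n A : ℕ) (hA : A < 2 ^ n) :
    ((Finset.univ : Finset (Fin (2 ^ n))).filter fun c : Fin (2 ^ n) => (c : ℕ) &&& A = (c : ℕ)).card
      = 2 ^ popcount A := by
  rw [← card_submask n A hA]
  have hpos : (0:ℕ) < 2 ^ n := Nat.pow_pos (by norm_num)
  apply Finset.card_nbij' (i := Fin.val) (j := fun c => (⟨c % 2 ^ n, Nat.mod_lt _ hpos⟩ : Fin (2 ^ n)))
  · intro c hc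
    simp only [Finset.mem_coe, Finset.mem_filter, Finset.mem_range] at hc ⊢
    exact ⟨c.isLt, hc.2⟩
  · intro c hc
    simp only [Finset.mem_coe, Finset.mem_filter, Finset.mem_range, Finset.mem_univ, true_and] at hc ⊢
    rw [Nat.mod_eq_of_lt hc.1]
    exact hc.2
  · intro c _
    ext
    exact Nat.mod_eq_of_lt c.isLt
  · intro c hc
    simp only [Finset.mem_coe, Finset.mem_filter, Finset.mem_range] at hc
    exact Nat.mod_eq_of_lt hc.1

lemma count_lemma (n w : ℕ) (T : Finset (Fin (2 ^ n))) :
    ∑ c : Fin (2 ^ n), ((T.filter fun t : Fin (2 ^ n) => (c : ℕ) &&& (t : ℕ) = (c : ℕ)).card).choose w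
      = ∑ S ∈ Finset.powersetCard w T,
          2 ^ popcount (Finset.fold (fun a b : ℕ => a &&& b) (2 ^ n - 1)
            (fun j : Fin (2 ^ n) => (j : ℕ)) S) := by
  classical
  have hpos : (0:ℕ) < 2 ^ n := Nat.pow_pos (by norm_num)
  have hA : ∀ S : Finset (Fin (2 ^ n)),
      Finset.fold (fun a b : ℕ => a &&& b) (2 ^ n - 1) (fun j : Fin (2 ^ n) => (j : ℕ)) S
        < 2 ^ n :=
    fun S => lt_of_le_of_lt (fold_land_le n S) (by omega)
  have h1 : ∀ S : Finset (Fin (2 ^ n)),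
      2 ^ popcount (Finset.fold (fun a b : ℕ => a &&& b) (2 ^ n - 1)
          (fun j : Fin (2 ^ n) => (j : ℕ)) S)
        = ((Finset.univ : Finset (Fin (2 ^ n))).filter
            fun c : Fin (2 ^ n) => ∀ t ∈ S, (c : ℕ) &&& (t : ℕ) = (c : ℕ)).card := by
    intro S
    rw [← card_fin_submask n _ (hA S)]
    apply congrArg
    apply Finset.filter_congr
    intro c _
    exact fold_land_iff n (c : ℕ) c.isLt S
  symm
  rw [Finset.sum_congr rfl fun S _ => h1 S]
  rw [Finset.sum_congr rfl fun S (_ : S ∈ Finset.powersetCard w T) =>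
    Finset.card_filter (fun c : Fin (2 ^ n) => ∀ t ∈ S, (c : ℕ) &&& (t : ℕ) = (c : ℕ)) _]
  rw [Finset.sum_comm]
  apply Finset.sum_congr rfl
  intro c _
  rw [← Finset.card_filter]
  have hfp := filter_powersetCard w T (fun t : Fin (2 ^ n) => (c : ℕ) &&& (t : ℕ) = (c : ℕ))
  rw [Finset.filter_congr_decidable] at hfp ⊢
  rw [hfp, Finset.card_powersetCard]

/-- exact formula for the Hamming weight of a sum of rows of the
polar matrix, as an identity of integers. -/
theorem hamming_weight_of_row_sum (n : ℕ) (T : Finset (Fin (2 ^ n))) (hT : T.Nonempty) :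
    (hammingWeight (∑ t ∈ T, row n t) : ℤ) =
      ∑ w ∈ Finset.Icc 1 T.card, (-2 : ℤ) ^ (w - 1) *
        ∑ S ∈ Finset.powersetCard w T,
          2 ^ popcount (Finset.fold (· &&& ·) (2 ^ n - 1) (fun j : Fin (2 ^ n) => (j : ℕ)) S) := by
  classical
  have hv : ∀ c : Fin (2 ^ n), (∑ t ∈ T, row n t) c
      = (((T.filter fun t : Fin (2 ^ n) => (c : ℕ) &&& (t : ℕ) = (c : ℕ)).card : ℕ) : ZMod 2) := by
    intro c
    rw [Finset.sum_apply]
    simp only [row, polarG_apply]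
    rw [Finset.sum_boole]
  have hw : hammingWeight (∑ t ∈ T, row n t)
      = ((Finset.univ : Finset (Fin (2 ^ n))).filter
          fun c : Fin (2 ^ n) =>
            Odd (T.filter fun t : Fin (2 ^ n) => (c : ℕ) &&& (t : ℕ) = (c : ℕ)).card).card := by
    unfold hammingWeight
    apply congrArg
    apply Finset.filter_congr
    intro c _
    rw [hv c]
    rw [Ne, ZMod.natCast_eq_zero_iff, Nat.odd_iff]
    omega
  rw [hw]
  rw [Finset.card_filter]
  push_cast
  rw [Finset.sum_congr rfl fun (c : Fin (2 ^ n)) (_ : c ∈ Finset.univ) =>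
    (odd_indicator ((T.filter fun t : Fin (2 ^ n) => (c : ℕ) &&& (t : ℕ) = (c : ℕ)).card) T.card
      (Finset.card_filter_le _ _)).symm]
  rw [Finset.sum_comm]
  apply Finset.sum_congr rfl
  intro w _
  rw [← Finset.mul_sum]
  congr 1
  have := count_lemma n w T
  have hcast := congrArg (fun x : ℕ => (x : ℤ)) this
  push_cast at hcast
  exact hcast
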